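/- For a fixed nonzero t ∈ ℤ/qℤ and independent uniform x_1,...,x_L ∈ ℤ/qℤ, let X_t be the number of nonzero ε ∈ {0,1}^L with ε·x = t. Then Var(X_t) = μ(1 − 1/q) where μ = (2^L − 1)/q. -/

import Mathlib

set_option linter.unusedSectionVars false

noncomputable section

lemma fiber_card {A B : Type*} [AddCommGroup A] [AddCommGroup B]
    (f : A →+ B) (hf : Function.Surjective f) (b : B) :
    Nat.card {a : A // f a = b} * Nat.card B = Nat.card A := by
  obtain ⟨a0, ha0⟩ := hf b
  have e1 : {a : A // f a = b} ≃ (f.ker : AddSubgroup A) :=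
    { toFun := fun a => ⟨a.1 - a0, by
        simp [AddMonoidHom.mem_ker, map_sub, a.2, ha0]⟩
      invFun := fun k => ⟨k.1 + a0, by
        have hk := k.2
        rw [AddMonoidHom.mem_ker] at hk
        rw [map_add, hk, ha0, zero_add]⟩
      left_inv := fun a => by simp
      right_inv := fun k => by simp }
  have e2 : A ⧸ f.ker ≃ B := (QuotientAddGroup.quotientKerEquivOfSurjective f hf).toEquiv
  rw [Nat.card_congr e1, ← Nat.card_congr e2,
    AddSubgroup.card_eq_card_quotient_mul_card_addSubgroup f.ker, mul_comm]

variable {q L : ℕ} [NeZero q]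

def phi (ε : Fin L → Bool) : (Fin L → ZMod q) →+ ZMod q where
  toFun := fun (x : Fin L → ZMod q) => ∑ i, if ε i then x i else 0
  map_zero' := by simp
  map_add' := fun x y => by
    have h : ∀ i, (if ε i then (x + y) i else 0)
        = (if ε i then x i else 0) + (if ε i then y i else 0) := fun i => by
      by_cases h : ε i <;> simp [h]
    simp only [h, Finset.sum_add_distrib]

lemma phi_single (ε : Fin L → Bool) (j : Fin L) (a : ZMod q) :
    phi ε (Pi.single j a) = if ε j then a else 0 := by
  show (∑ i, if ε i then Pi.single j a i else 0) = _
  rw [Finset.sum_eq_single j]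
  · simp
  · intro i _ hij
    by_cases h : ε i <;> simp [h, Pi.single_eq_of_ne hij]
  · simp

lemma phi_surj {ε : Fin L → Bool} (hε : ε ≠ fun _ => false) :
    Function.Surjective (phi (q := q) ε) := by
  have : ∃ i, ε i = true := by
    by_contra h
    push_neg at h
    exact hε (funext fun i => by simpa using h i)
  obtain ⟨i, hi⟩ := this
  intro a
  exact ⟨Pi.single i a, by rw [phi_single, hi, if_pos rfl]⟩

lemma exists_true {ε : Fin L → Bool} (hε : ε ≠ fun _ => false) : ∃ i, ε i = true := by
  by_contra h
  push_neg at h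
  exact hε (funext fun i => by simpa using h i)

lemma helper (ε δ : Fin L → Bool) (i j : Fin L) (hij : j ≠ i)
    (hεi : ε i = true) (hδi : δ i = false) (hδj : δ j = true) (u v : ZMod q) :
    ∃ x, phi ε x = u ∧ phi δ x = v := by
  refine ⟨Pi.single j v + Pi.single i (u - if ε j then v else 0), ?_, ?_⟩
  · rw [map_add, phi_single, phi_single, hεi, if_pos rfl]
    ring
  · rw [map_add, phi_single, phi_single, hδi, hδj, if_pos rfl, if_neg (by simp), add_zero]

lemma pair_aux {ε δ : Fin L → Bool} (hεδ : ε ≠ δ)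
    (hε : ε ≠ fun _ => false) (hδ : δ ≠ fun _ => false) :
    Function.Surjective ((phi (q := q) ε).prod (phi δ)) ∧ 2 ≤ L := by
  have : ∃ i, ε i ≠ δ i := by
    by_contra h
    push_neg at h
    exact hεδ (funext h)
  obtain ⟨i, hi⟩ := this
  rcases Bool.eq_false_or_eq_true (ε i) with h1 | h1 <;>
    rcases Bool.eq_false_or_eq_true (δ i) with h2 | h2
  · exact absurd (h1.trans h2.symm) hi
  · -- ε i = true, δ i = false : use helper ε δ
    obtain ⟨j, hj⟩ := exists_true hδ
    have hij : j ≠ i := fun h => by rw [h, h2] at hj; exact Bool.false_ne_true hj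
    constructor
    · rintro ⟨u, v⟩
      obtain ⟨x, h3, h4⟩ := helper ε δ i j hij h1 h2 hj u v
      exact ⟨x, by simp [AddMonoidHom.prod_apply, h3, h4]⟩
    · rw [← Fintype.card_fin L]
      exact Fintype.one_lt_card_iff.2 ⟨j, i, hij⟩
  · -- ε i = false, δ i = true : use helper δ ε
    obtain ⟨j, hj⟩ := exists_true hε
    have hij : j ≠ i := fun h => by rw [h, h1] at hj; exact Bool.false_ne_true hj
    constructor
    · rintro ⟨u, v⟩
      obtain ⟨x, h3, h4⟩ := helper δ ε i j hij h2 h1 hj v u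
      exact ⟨x, by simp [AddMonoidHom.prod_apply, h3, h4]⟩
    · rw [← Fintype.card_fin L]
      exact Fintype.one_lt_card_iff.2 ⟨j, i, hij⟩
  · exact absurd (h1.trans h2.symm) hi

lemma card_pi_zmod : Nat.card (Fin L → ZMod q) = q ^ L := by
  rw [Nat.card_pi]
  simp [Nat.card_zmod]

lemma card_fiber_one (hL : 0 < L) {ε : Fin L → Bool} (hε : ε ≠ fun _ => false)
    (t : ZMod q) :
    Nat.card {x : Fin L → ZMod q // phi ε x = t} = q ^ (L - 1) := by
  have h := fiber_card (phi (q := q) ε) (phi_surj hε) t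
  rw [Nat.card_zmod, card_pi_zmod] at h
  have hq : q ^ L = q ^ (L - 1) * q := by
    rw [← pow_succ, Nat.sub_add_cancel hL]
  exact Nat.eq_of_mul_eq_mul_right (NeZero.pos q) (h.trans hq)

lemma card_fiber_two {ε δ : Fin L → Bool} (hεδ : ε ≠ δ)
    (hε : ε ≠ fun _ => false) (hδ : δ ≠ fun _ => false) (t : ZMod q) :
    Nat.card {x : Fin L → ZMod q // phi ε x = t ∧ phi δ x = t} = q ^ (L - 2) := by
  obtain ⟨hs, hL2⟩ := pair_aux (q := q) hεδ hε hδ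
  have h := fiber_card _ hs (t, t)
  rw [card_pi_zmod] at h
  have hc : Nat.card (ZMod q × ZMod q) = q * q := by
    rw [Nat.card_prod, Nat.card_zmod]
  rw [hc] at h
  have he : {x : Fin L → ZMod q // ((phi ε).prod (phi δ)) x = (t, t)}
      ≃ {x : Fin L → ZMod q // phi ε x = t ∧ phi δ x = t} :=
    Equiv.subtypeEquivRight fun x => by simp [AddMonoidHom.prod_apply, Prod.ext_iff]
  rw [Nat.card_congr he] at h
  have hq : q ^ L = q ^ (L - 2) * (q * q) := by
    rw [← mul_assoc, ← pow_succ, ← pow_succ]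
    congr 1
    omega
  exact Nat.eq_of_mul_eq_mul_right (Nat.mul_pos (NeZero.pos q) (NeZero.pos q)) (h.trans hq)

lemma phi_apply (ε : Fin L → Bool) (x : Fin L → ZMod q) :
    phi ε x = ∑ i, if ε i then x i else 0 := rfl

end

theorem stmt_4 (q L : ℕ) [NeZero q] (hL : 0 < L) (t : ZMod q) (ht : t ≠ 0)
    (X : (Fin L → ZMod q) → ℕ)
    (hX : ∀ x, X x = Nat.card {ε : Fin L → Bool //
          ε ≠ (fun _ => false) ∧ (∑ i, if ε i then x i else 0) = t}) :
    (∑ x : Fin L → ZMod q, (X x : ℝ) ^ 2) / q ^ L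
        - ((∑ x : Fin L → ZMod q, (X x : ℝ)) / q ^ L) ^ 2
      = (((2 : ℝ) ^ L - 1) / q) * (1 - 1 / q) := by
  classical
  set s : Finset (Fin L → Bool) :=
    Finset.univ.filter (fun ε => ε ≠ fun _ => false) with hs
  have hcard_s : s.card = 2 ^ L - 1 := by
    rw [hs, Finset.filter_ne', Finset.card_erase_of_mem (Finset.mem_univ _)]
    simp
  have hXs : ∀ x, X x = ∑ ε ∈ s, (if phi ε x = t then 1 else 0) := by
    intro x
    rw [hX x, Nat.card_eq_fintype_card, Fintype.card_subtype, Finset.sum_boole,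
      Nat.cast_id, hs, Finset.filter_filter]
    congr 1
  have key_one : ∀ ε ∈ s,
      (∑ x : Fin L → ZMod q, if phi ε x = t then 1 else 0) = q ^ (L - 1) := by
    intro ε hε
    have hε' : ε ≠ fun _ => false := (Finset.mem_filter.mp hε).2
    rw [Finset.sum_boole, Nat.cast_id, ← Fintype.card_subtype,
      ← Nat.card_eq_fintype_card]
    exact card_fiber_one hL hε' t
  have key_two : ∀ ε ∈ s, ∀ δ ∈ s, ε ≠ δ →
      (∑ x : Fin L → ZMod q,
        (if phi ε x = t then 1 else 0) * (if phi δ x = t then 1 else 0))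
      = q ^ (L - 2) := by
    intro ε hε δ hδ hεδ
    have hε' : ε ≠ fun _ => false := (Finset.mem_filter.mp hε).2
    have hδ' : δ ≠ fun _ => false := (Finset.mem_filter.mp hδ).2
    have hii : ∀ x : Fin L → ZMod q,
        (if phi ε x = t then (1:ℕ) else 0) * (if phi δ x = t then 1 else 0)
        = if phi ε x = t ∧ phi δ x = t then 1 else 0 := by
      intro x
      by_cases h1 : phi ε x = t <;> by_cases h2 : phi δ x = t <;> simp [h1, h2]
    simp only [hii]
    rw [Finset.sum_boole, Nat.cast_id, ← Fintype.card_subtype,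
      ← Nat.card_eq_fintype_card]
    exact card_fiber_two hεδ hε' hδ' t
  have hS1 : ∑ x : Fin L → ZMod q, X x = (2 ^ L - 1) * q ^ (L - 1) := by
    calc ∑ x : Fin L → ZMod q, X x
        = ∑ x : Fin L → ZMod q, ∑ ε ∈ s, (if phi ε x = t then 1 else 0) := by
          exact Finset.sum_congr rfl fun x _ => hXs x
      _ = ∑ ε ∈ s, ∑ x : Fin L → ZMod q, (if phi ε x = t then 1 else 0) :=
          Finset.sum_comm
      _ = ∑ _ε ∈ s, q ^ (L - 1) := Finset.sum_congr rfl key_one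
      _ = (2 ^ L - 1) * q ^ (L - 1) := by
          rw [Finset.sum_const, hcard_s, smul_eq_mul]
  have hS2 : ∑ x : Fin L → ZMod q, (X x) ^ 2
      = (2 ^ L - 1) * q ^ (L - 1) + (2 ^ L - 1) * (2 ^ L - 2) * q ^ (L - 2) := by
    calc ∑ x : Fin L → ZMod q, (X x) ^ 2
        = ∑ x : Fin L → ZMod q, ∑ ε ∈ s, ∑ δ ∈ s,
            (if phi ε x = t then 1 else 0) * (if phi δ x = t then 1 else 0) := by
          refine Finset.sum_congr rfl fun x _ => ?_
          rw [hXs x, sq, Finset.sum_mul_sum]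
      _ = ∑ ε ∈ s, ∑ δ ∈ s, ∑ x : Fin L → ZMod q,
            (if phi ε x = t then 1 else 0) * (if phi δ x = t then 1 else 0) := by
          rw [Finset.sum_comm]
          exact Finset.sum_congr rfl fun ε _ => Finset.sum_comm
      _ = ∑ ε ∈ s, (q ^ (L - 1) + (s.card - 1) * q ^ (L - 2)) := by
          refine Finset.sum_congr rfl fun ε hε => ?_
          rw [← Finset.add_sum_erase s _ hε]
          congr 1
          · have hii : ∀ x : Fin L → ZMod q,
                (if phi ε x = t then (1:ℕ) else 0) * (if phi ε x = t then 1 else 0)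
                = if phi ε x = t then 1 else 0 := by
              intro x; by_cases h : phi ε x = t <;> simp [h]
            simp only [hii]
            exact key_one ε hε
          · rw [Finset.sum_congr rfl (fun δ hδ => key_two ε hε δ
              (Finset.mem_of_mem_erase hδ) (Ne.symm (Finset.ne_of_mem_erase hδ))),
              Finset.sum_const, Finset.card_erase_of_mem hε, smul_eq_mul]
      _ = (2 ^ L - 1) * q ^ (L - 1) + (2 ^ L - 1) * (2 ^ L - 2) * q ^ (L - 2) := by
          rw [Finset.sum_const, hcard_s, smul_eq_mul, Nat.mul_add, ← mul_assoc]
          congr 2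
  -- now real arithmetic
  have h2L : 1 ≤ 2 ^ L := Nat.one_le_two_pow
  have h2L' : 2 ≤ 2 ^ L := by
    calc 2 = 2 ^ 1 := (pow_one 2).symm
    _ ≤ 2 ^ L := Nat.pow_le_pow_right (by norm_num) hL
  have hq : (q : ℝ) ≠ 0 := Nat.cast_ne_zero.mpr (NeZero.ne q)
  have hA : ((2 ^ L - 1 : ℕ) : ℝ) = 2 ^ L - 1 := by
    rw [Nat.cast_sub h2L]; push_cast; ring
  have hB : ((2 ^ L - 2 : ℕ) : ℝ) = 2 ^ L - 2 := by
    rw [Nat.cast_sub h2L']; push_cast; ring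
  have hS1R : ∑ x : Fin L → ZMod q, (X x : ℝ)
      = ((2:ℝ) ^ L - 1) * (q : ℝ) ^ (L - 1) := by
    rw [← Nat.cast_sum, hS1]; push_cast [hA]; ring
  have hS2R : ∑ x : Fin L → ZMod q, (X x : ℝ) ^ 2
      = ((2:ℝ) ^ L - 1) * (q : ℝ) ^ (L - 1)
        + ((2:ℝ) ^ L - 1) * ((2:ℝ) ^ L - 2) * (q : ℝ) ^ (L - 2) := by
    have : ∑ x : Fin L → ZMod q, (X x : ℝ) ^ 2
        = ((∑ x : Fin L → ZMod q, (X x) ^ 2 : ℕ) : ℝ) := by push_cast; ring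
    rw [this, hS2]; push_cast [hA, hB]; ring
  rw [hS1R, hS2R]
  rcases eq_or_lt_of_le (show 1 ≤ L from hL) with h1 | h2
  · -- L = 1
    have hL1 : L = 1 := h1.symm
    subst hL1
    norm_num
    field_simp
  · -- 2 ≤ L
    have h2 : 2 ≤ L := h2
    have e1 : (q:ℝ) ^ (L - 1) = (q:ℝ) ^ (L - 2) * q := by
      rw [← pow_succ]; congr 1; omega
    have e2 : (q:ℝ) ^ L = (q:ℝ) ^ (L - 2) * q ^ 2 := by
      rw [← pow_add]; congr 1; omega
    have hP : (q:ℝ) ^ (L - 2) ≠ 0 := pow_ne_zero _ hq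
    rw [e1, e2]
    field_simp
    ring
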